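/- arXiv:1705.03344 — 4 statements merged into one kernel-verified Lean document; each statement's English description precedes it below -/
import Mathlib

section
/- With notation as above (unimodular M with rows (pᵢ,qᵢ,rᵢ), rᵢ>0, uᵢ = (pᵢ/rᵢ, qᵢ/rᵢ), L = (M⁻¹)ᵀ with rows (aᵢ,bᵢ,cᵢ), δᵢ = √(aᵢ² + bᵢ²)), the distance between vertices uⱼ and u_k equals δᵢ/(rⱼ r_k), and the distance from uᵢ to the line through uⱼ and u_k equals 1/(rᵢ δᵢ), for {i,j,k} = {1,2,3}. -/
open Metric

lemma infDist_line (a b p : EuclideanSpace ℝ (Fin 2)) (hab : a ≠ b) :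
    Metric.infDist p (affineSpan ℝ {a, b} : Set (EuclideanSpace ℝ (Fin 2))) =
      |(p 0 - a 0) * (b 1 - a 1) - (p 1 - a 1) * (b 0 - a 0)| / dist a b := by
  set w : EuclideanSpace ℝ (Fin 2) := b - a with hw
  have hwne : w ≠ 0 := sub_ne_zero.mpr (Ne.symm hab)
  have hw0 : (w 0) ^ 2 + (w 1) ^ 2 > 0 := by
    rcases (by
      by_contra h
      push_neg at h
      apply hwne
      ext i
      fin_cases i <;> simp [h.1, h.2] : w 0 ≠ 0 ∨ w 1 ≠ 0) with h | h <;> positivity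
  set v : EuclideanSpace ℝ (Fin 2) := p - a with hv
  set t : ℝ := (v 0 * w 0 + v 1 * w 1) / ((w 0) ^ 2 + (w 1) ^ 2) with ht
  set foot : EuclideanSpace ℝ (Fin 2) := AffineMap.lineMap a b t with hfoot
  have hfootmem : foot ∈ (affineSpan ℝ {a, b} : Set (EuclideanSpace ℝ (Fin 2))) :=
    AffineMap.lineMap_mem_affineSpan_pair t a b
  have hfooteq : (p - foot : EuclideanSpace ℝ (Fin 2)) = v - t • w := by
    simp only [hfoot, AffineMap.lineMap_apply, hv, hw]
    rw [vsub_eq_sub, vadd_eq_add]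
    abel
  have hds : ∀ i : Fin 2, (p - foot : EuclideanSpace ℝ (Fin 2)) i = v i - t * w i := by
    intro i
    rw [hfooteq]
    rfl
  have hperp : (p - foot : EuclideanSpace ℝ (Fin 2)) 0 * w 0
      + (p - foot : EuclideanSpace ℝ (Fin 2)) 1 * w 1 = 0 := by
    rw [hds 0, hds 1, ht]
    field_simp
    ring
  have key : dist p foot = |v 0 * w 1 - v 1 * w 0| / Real.sqrt ((w 0) ^ 2 + (w 1) ^ 2) := by
    rw [dist_eq_norm, EuclideanSpace.norm_eq]
    rw [show ∑ i : Fin 2, ‖(p - foot : EuclideanSpace ℝ (Fin 2)) i‖ ^ 2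
        = (v 0 - t * w 0) ^ 2 + (v 1 - t * w 1) ^ 2 by
      rw [Fin.sum_univ_two, Real.norm_eq_abs, Real.norm_eq_abs, sq_abs, sq_abs, hds 0, hds 1]]
    have : (v 0 - t * w 0) ^ 2 + (v 1 - t * w 1) ^ 2
        = (v 0 * w 1 - v 1 * w 0) ^ 2 / ((w 0) ^ 2 + (w 1) ^ 2) := by
      rw [ht]; field_simp; ring
    rw [this, Real.sqrt_div (by positivity), Real.sqrt_sq_eq_abs]
  have hdab : dist a b = Real.sqrt ((w 0) ^ 2 + (w 1) ^ 2) := by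
    rw [EuclideanSpace.dist_eq, Fin.sum_univ_two]
    congr 1
    have h0 : w 0 = b 0 - a 0 := rfl
    have h1 : w 1 = b 1 - a 1 := rfl
    rw [h0, h1, Real.dist_eq, Real.dist_eq, sq_abs, sq_abs]; ring
  have hmain : Metric.infDist p (affineSpan ℝ {a, b} : Set (EuclideanSpace ℝ (Fin 2)))
      = dist p foot := by
    apply le_antisymm (Metric.infDist_le_dist_of_mem hfootmem)
    by_contra h
    push_neg at h
    obtain ⟨y, hy, hlt⟩ := (Metric.infDist_lt_iff ⟨foot, hfootmem⟩).mp h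
    -- show dist p foot ≤ dist p y
    have hy' : (y - a) +ᵥ a ∈ line[ℝ, a, b] := by
      have : (y - a) +ᵥ a = y := by simp [vadd_eq_add]
      rwa [this]
    obtain ⟨s, hs⟩ := vadd_left_mem_affineSpan_pair.mp hy'
    rw [vsub_eq_sub] at hs
    have hyeq : (foot - y : EuclideanSpace ℝ (Fin 2)) = (t - s) • w := by
      have hfa : (foot - a : EuclideanSpace ℝ (Fin 2)) = t • w := by
        rw [hfoot]
        simp only [AffineMap.lineMap_apply, vsub_eq_sub, vadd_eq_add, hw]
        abel
      have : (foot - y : EuclideanSpace ℝ (Fin 2)) = (foot - a) - (y - a) := by abel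
      rw [this, hfa, ← hs, sub_smul]
    have hpyt : (p - y : EuclideanSpace ℝ (Fin 2)) = (p - foot) + (t - s) • w := by
      rw [← hyeq]; abel
    have hsq : dist p y ^ 2 = dist p foot ^ 2 + ((t - s)) ^ 2 * ((w 0)^2 + (w 1)^2) := by
      rw [dist_eq_norm, dist_eq_norm, hpyt]
      rw [EuclideanSpace.norm_eq, EuclideanSpace.norm_eq]
      rw [Real.sq_sqrt (by positivity), Real.sq_sqrt (by positivity)]
      rw [Fin.sum_univ_two, Fin.sum_univ_two]
      have e0 : ((p - foot + (t - s) • w : EuclideanSpace ℝ (Fin 2)) 0)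
          = (p - foot : EuclideanSpace ℝ (Fin 2)) 0 + (t - s) * w 0 := rfl
      have e1 : ((p - foot + (t - s) • w : EuclideanSpace ℝ (Fin 2)) 1)
          = (p - foot : EuclideanSpace ℝ (Fin 2)) 1 + (t - s) * w 1 := rfl
      rw [e0, e1]
      simp only [Real.norm_eq_abs, sq_abs]
      linear_combination (2*(t-s)) * hperp
    have : dist p foot ≤ dist p y := by
      nlinarith [dist_nonneg (x := p) (y := y), dist_nonneg (x := p) (y := foot)]
    linarith
  rw [hmain, key, hdab]
  congr 2

lemma case_aux (a b p : EuclideanSpace ℝ (Fin 2)) (pj qj rj pk qk rk pi qi ri δ : ℝ)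
    (hrj : 0 < rj) (hrk : 0 < rk) (hri : 0 < ri)
    (ha : a = ![pj/rj, qj/rj]) (hb : b = ![pk/rk, qk/rk]) (hp : p = ![pi/ri, qi/ri])
    (hδ : δ = Real.sqrt ((pj*rk - pk*rj)^2 + (qj*rk - qk*rj)^2))
    (hcr : pi*(qj*rk - qk*rj) - qi*(pj*rk - pk*rj) + ri*(pj*qk - pk*qj) = 1 ∨
           pi*(qj*rk - qk*rj) - qi*(pj*rk - pk*rj) + ri*(pj*qk - pk*qj) = -1) :
    dist a b = δ/(rj*rk) ∧
    Metric.infDist p (affineSpan ℝ {a, b} : Set (EuclideanSpace ℝ (Fin 2))) = 1/(ri*δ) := by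
  set A : ℝ := pj*rk - pk*rj with hA
  set B : ℝ := qj*rk - qk*rj with hB
  set C : ℝ := pj*qk - pk*qj with hC
  have hδnn : 0 ≤ δ := hδ ▸ Real.sqrt_nonneg _
  have hδsq : δ^2 = A^2 + B^2 := by rw [hδ, Real.sq_sqrt (by positivity)]
  have hδpos : 0 < δ := by
    rcases lt_or_eq_of_le hδnn with h | h
    · exact h
    · exfalso
      have h0 : A^2 + B^2 = 0 := by rw [← hδsq, ← h, zero_pow two_ne_zero]
      have hA0 : A = 0 := by nlinarith [sq_nonneg A, sq_nonneg B]
      have hB0 : B = 0 := by nlinarith [sq_nonneg A, sq_nonneg B]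
      have hC0 : C = 0 := by
        have : rk * C = qk * A - pk * B := by rw [hA, hB, hC]; ring
        have : rk * C = 0 := by rw [this, hA0, hB0]; ring
        exact (mul_eq_zero.mp this).resolve_left (ne_of_gt hrk)
      rcases hcr with h1 | h1 <;> rw [hA0, hB0] at h1 <;> simp [hC0] at h1
  have hdab : dist a b = δ/(rj*rk) := by
    rw [EuclideanSpace.dist_eq, Fin.sum_univ_two, ha, hb]
    simp only [Matrix.cons_val_zero, Matrix.cons_val_one, Matrix.head_cons, Real.dist_eq, sq_abs]
    have e : (pj/rj - pk/rk)^2 + (qj/rj - qk/rk)^2 = (A^2 + B^2)/(rj*rk)^2 := by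
      rw [hA, hB]; field_simp
    rw [e, Real.sqrt_div (by positivity), Real.sqrt_sq (by positivity), ← hδsq,
      Real.sqrt_sq hδnn]
  refine ⟨hdab, ?_⟩
  have hab : a ≠ b := by
    have : 0 < dist a b := by rw [hdab]; positivity
    exact dist_pos.mp this
  have hcross : |(p 0 - a 0) * (b 1 - a 1) - (p 1 - a 1) * (b 0 - a 0)| = 1/(ri*rj*rk) := by
    have e : (p 0 - a 0) * (b 1 - a 1) - (p 1 - a 1) * (b 0 - a 0)
        = -((pi*B - qi*A + ri*C)/(ri*rj*rk)) := by
      rw [hp, ha, hb]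
      simp only [Matrix.cons_val_zero, Matrix.cons_val_one, Matrix.head_cons]
      rw [hA, hB, hC]; field_simp; ring
    rw [e, abs_neg]
    rcases hcr with h | h
    · rw [h, abs_div, abs_one, abs_of_pos (by positivity)]
    · rw [h, neg_div, abs_neg, abs_div, abs_one, abs_of_pos (by positivity)]
  rw [infDist_line a b p hab, hcross, hdab]
  field_simp


/-- Side lengths and heights of a regular triangle in terms of the dual data:
`dist (uⱼ) (u_k) = δᵢ/(rⱼ r_k)` and the distance from `uᵢ` to the opposite line is
`1/(rᵢ δᵢ)`. -/
theorem stmt4 (M : Matrix (Fin 3) (Fin 3) ℤ)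
    (hr : ∀ i, 0 < M i 2) (hdet : M.det = 1)
    (u : Fin 3 → EuclideanSpace ℝ (Fin 2))
    (hu : ∀ i, u i = ![(M i 0 : ℝ) / (M i 2 : ℝ), (M i 1 : ℝ) / (M i 2 : ℝ)])
    (L : Matrix (Fin 3) (Fin 3) ℝ)
    (hL : L = ((M.map (Int.cast : ℤ → ℝ))⁻¹).transpose)
    (δ : Fin 3 → ℝ)
    (hδ : ∀ i, δ i = Real.sqrt ((L i 0) ^ 2 + (L i 1) ^ 2)) :
    ∀ i j k : Fin 3, i ≠ j → j ≠ k → k ≠ i →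
      dist (u j) (u k) = δ i / ((M j 2 : ℝ) * (M k 2 : ℝ)) ∧
      Metric.infDist (u i) (affineSpan ℝ {u j, u k} : Set (EuclideanSpace ℝ (Fin 2))) =
        1 / ((M i 2 : ℝ) * δ i) := by
  set m : Fin 3 → Fin 3 → ℝ := fun i j => (M i j : ℝ) with hm
  have hrm : ∀ i, 0 < m i 2 := fun i => by
    simp only [hm]; exact_mod_cast hr i
  have hdetR : (M.map (Int.cast : ℤ → ℝ)).det = 1 := by
    have := RingHom.map_det (Int.castRingHom ℝ) M
    rw [hdet] at this
    simpa using this.symm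
  have hdet3 : m 0 0 * m 1 1 * m 2 2 - m 0 0 * m 1 2 * m 2 1
      - m 0 1 * m 1 0 * m 2 2 + m 0 1 * m 1 2 * m 2 0
      + m 0 2 * m 1 0 * m 2 1 - m 0 2 * m 1 1 * m 2 0 = 1 := by
    have := Matrix.det_fin_three (M.map (Int.cast : ℤ → ℝ))
    rw [hdetR] at this
    simpa [Matrix.map_apply, hm] using this.symm
  have hadj : L = ((M.map (Int.cast : ℤ → ℝ)).adjugate).transpose := by
    rw [hL, Matrix.inv_def, hdetR, Ring.inverse_one, one_smul]
  have hLij : ∀ i j : Fin 3, L i j = (M.map (Int.cast : ℤ → ℝ)).adjugate j i := by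
    intro i j; rw [hadj]; rfl
  have hδ0 : δ 0 = Real.sqrt ((m 1 0 * m 2 2 - m 2 0 * m 1 2)^2
      + (m 1 1 * m 2 2 - m 2 1 * m 1 2)^2) := by
    rw [hδ 0, hLij, hLij, Matrix.adjugate_fin_three]
    simp only [Matrix.map_apply, Matrix.cons_val', Matrix.cons_val_zero, Matrix.cons_val_one,
      Matrix.cons_val_two, Matrix.tail_cons, Matrix.head_cons, Matrix.empty_val',
      Matrix.cons_val_fin_one, Matrix.head_fin_const, Matrix.of_apply]
    congr 1; push_cast [hm]; ring
  have hδ1 : δ 1 = Real.sqrt ((m 0 0 * m 2 2 - m 2 0 * m 0 2)^2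
      + (m 0 1 * m 2 2 - m 2 1 * m 0 2)^2) := by
    rw [hδ 1, hLij, hLij, Matrix.adjugate_fin_three]
    simp only [Matrix.map_apply, Matrix.cons_val', Matrix.cons_val_zero, Matrix.cons_val_one,
      Matrix.cons_val_two, Matrix.tail_cons, Matrix.head_cons, Matrix.empty_val',
      Matrix.cons_val_fin_one, Matrix.head_fin_const, Matrix.of_apply]
    congr 1; push_cast [hm]; ring
  have hδ2 : δ 2 = Real.sqrt ((m 0 0 * m 1 2 - m 1 0 * m 0 2)^2
      + (m 0 1 * m 1 2 - m 1 1 * m 0 2)^2) := by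
    rw [hδ 2, hLij, hLij, Matrix.adjugate_fin_three]
    simp only [Matrix.map_apply, Matrix.cons_val', Matrix.cons_val_zero, Matrix.cons_val_one,
      Matrix.cons_val_two, Matrix.tail_cons, Matrix.head_cons, Matrix.empty_val',
      Matrix.cons_val_fin_one, Matrix.head_fin_const, Matrix.of_apply]
    congr 1; push_cast [hm]; ring
  intro i j k hij hjk hki
  fin_cases i <;> fin_cases j <;> fin_cases k <;>
    try (first | exact absurd rfl hij | exact absurd rfl hjk | exact absurd rfl hki)
  · exact case_aux (u 1) (u 2) (u 0) (m 1 0) (m 1 1) (m 1 2) (m 2 0) (m 2 1) (m 2 2) (m 0 0) (m 0 1) (m 0 2) (δ 0) (hrm 1) (hrm 2) (hrm 0) (hu 1) (hu 2) (hu 0) hδ0 (Or.inl (by linear_combination hdet3))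
  · exact case_aux (u 2) (u 1) (u 0) (m 2 0) (m 2 1) (m 2 2) (m 1 0) (m 1 1) (m 1 2) (m 0 0) (m 0 1) (m 0 2) (δ 0) (hrm 2) (hrm 1) (hrm 0) (hu 2) (hu 1) (hu 0) (by rw [hδ0]; congr 1; ring) (Or.inr (by linear_combination -hdet3))
  · exact case_aux (u 0) (u 2) (u 1) (m 0 0) (m 0 1) (m 0 2) (m 2 0) (m 2 1) (m 2 2) (m 1 0) (m 1 1) (m 1 2) (δ 1) (hrm 0) (hrm 2) (hrm 1) (hu 0) (hu 2) (hu 1) hδ1 (Or.inr (by linear_combination -hdet3))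
  · exact case_aux (u 2) (u 0) (u 1) (m 2 0) (m 2 1) (m 2 2) (m 0 0) (m 0 1) (m 0 2) (m 1 0) (m 1 1) (m 1 2) (δ 1) (hrm 2) (hrm 0) (hrm 1) (hu 2) (hu 0) (hu 1) (by rw [hδ1]; congr 1; ring) (Or.inl (by linear_combination hdet3))
  · exact case_aux (u 0) (u 1) (u 2) (m 0 0) (m 0 1) (m 0 2) (m 1 0) (m 1 1) (m 1 2) (m 2 0) (m 2 1) (m 2 2) (δ 2) (hrm 0) (hrm 1) (hrm 2) (hu 0) (hu 1) (hu 2) hδ2 (Or.inl (by linear_combination hdet3))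
  · exact case_aux (u 1) (u 0) (u 2) (m 1 0) (m 1 1) (m 1 2) (m 0 0) (m 0 1) (m 0 2) (m 2 0) (m 2 1) (m 2 2) (δ 2) (hrm 1) (hrm 0) (hrm 2) (hu 1) (hu 0) (hu 2) (by rw [hδ2]; congr 1; ring) (Or.inr (by linear_combination -hdet3))
end

section
/- With notation as above, the sine of the interior angle θᵢ of the triangle conv(u₁,u₂,u₃) at vertex uᵢ satisfies sin θᵢ = rᵢ/(δⱼ δ_k), where {i,j,k} = {1,2,3}. -/
open Real

lemma norm2 (v : EuclideanSpace ℝ (Fin 2)) : ‖v‖ = Real.sqrt ((v 0)^2 + (v 1)^2) := by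
  rw [EuclideanSpace.norm_eq]
  simp [Fin.sum_univ_two, Real.norm_eq_abs, sq_abs]

lemma inner2 (v w : EuclideanSpace ℝ (Fin 2)) :
    (inner ℝ v w : ℝ) = v 0 * w 0 + v 1 * w 1 := by
  simp [PiLp.inner_apply, Fin.sum_univ_two, RCLike.inner_apply]; ring

lemma sin_angle2 (v w : EuclideanSpace ℝ (Fin 2)) :
    Real.sin (InnerProductGeometry.angle v w) =
      Real.sqrt (1 - ((v 0 * w 0 + v 1 * w 1) /
        (Real.sqrt ((v 0)^2 + (v 1)^2) * Real.sqrt ((w 0)^2 + (w 1)^2)))^2) := by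
  rw [InnerProductGeometry.angle, Real.sin_arccos, inner2, norm2, norm2]

set_option maxHeartbeats 1000000 in
lemma core (p1 q1 r1 p2 q2 r2 p3 q3 r3 : ℝ)
    (h1 : 0 < r1) (h2 : 0 < r2) (h3 : 0 < r3)
    (hdet : (p1*(q2*r3 - q3*r2) - q1*(p2*r3 - p3*r2) + r1*(p2*q3 - p3*q2))^2 = 1)
    (a b c : EuclideanSpace ℝ (Fin 2))
    (ha : a = ![p2/r2, q2/r2]) (hb : b = ![p1/r1, q1/r1]) (hc : c = ![p3/r3, q3/r3]) :
    Real.sin (EuclideanGeometry.angle a b c) =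
    r1 / (Real.sqrt ((q3*r1 - q1*r3)^2 + (p1*r3 - p3*r1)^2) *
          Real.sqrt ((q1*r2 - q2*r1)^2 + (p2*r1 - p1*r2)^2)) := by
  have key : ((p2*r1-p1*r2)*(q3*r1-q1*r3) - (q2*r1-q1*r2)*(p3*r1-p1*r3))^2 = r1^2 := by
    linear_combination r1^2 * hdet
  have lag : ((q3*r1 - q1*r3)^2 + (p1*r3 - p3*r1)^2) * ((q1*r2 - q2*r1)^2 + (p2*r1 - p1*r2)^2)
      = ((p2*r1-p1*r2)*(q3*r1-q1*r3) - (q2*r1-q1*r2)*(p3*r1-p1*r3))^2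
        + ((p2*r1-p1*r2)*(p3*r1-p1*r3) + (q2*r1-q1*r2)*(q3*r1-q1*r3))^2 := by ring
  have hge : ((q3*r1 - q1*r3)^2 + (p1*r3 - p3*r1)^2) * ((q1*r2 - q2*r1)^2 + (p2*r1 - p1*r2)^2)
      ≥ r1^2 := by rw [lag, key]; nlinarith [sq_nonneg ((p2*r1-p1*r2)*(p3*r1-p1*r3) + (q2*r1-q1*r2)*(q3*r1-q1*r3))]
  have hp2 : 0 < (q3*r1 - q1*r3)^2 + (p1*r3 - p3*r1)^2 := by
    nlinarith [hge, sq_nonneg (q3*r1 - q1*r3), sq_nonneg (p1*r3 - p3*r1),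
      sq_nonneg (q1*r2 - q2*r1), sq_nonneg (p2*r1 - p1*r2), mul_pos h1 h1]
  have hp3 : 0 < (q1*r2 - q2*r1)^2 + (p2*r1 - p1*r2)^2 := by
    nlinarith [hge, sq_nonneg (q3*r1 - q1*r3), sq_nonneg (p1*r3 - p3*r1),
      sq_nonneg (q1*r2 - q2*r1), sq_nonneg (p2*r1 - p1*r2), mul_pos h1 h1]
  rw [EuclideanGeometry.angle, vsub_eq_sub, vsub_eq_sub, sin_angle2]
  simp only [ha, hb, hc, PiLp.sub_apply, Matrix.cons_val_zero, Matrix.cons_val_one,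
    Matrix.head_cons]
  have hA : (p2/r2 - p1/r1)^2 + (q2/r2 - q1/r1)^2
      = ((q1*r2 - q2*r1)^2 + (p2*r1 - p1*r2)^2) / (r1*r2)^2 := by
    field_simp; ring
  have hB : (p3/r3 - p1/r1)^2 + (q3/r3 - q1/r1)^2
      = ((q3*r1 - q1*r3)^2 + (p1*r3 - p3*r1)^2) / (r1*r3)^2 := by
    field_simp; ring
  rw [hA, hB, Real.sqrt_div (le_of_lt hp3) , Real.sqrt_div (le_of_lt hp2),
    Real.sqrt_sq (by positivity : (0:ℝ) ≤ r1*r2), Real.sqrt_sq (by positivity : (0:ℝ) ≤ r1*r3)]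
  set s2 := Real.sqrt ((q3*r1 - q1*r3)^2 + (p1*r3 - p3*r1)^2) with hs2
  set s3 := Real.sqrt ((q1*r2 - q2*r1)^2 + (p2*r1 - p1*r2)^2) with hs3
  have e2 : s2^2 = (q3*r1 - q1*r3)^2 + (p1*r3 - p3*r1)^2 := Real.sq_sqrt (le_of_lt hp2)
  have e3 : s3^2 = (q1*r2 - q2*r1)^2 + (p2*r1 - p1*r2)^2 := Real.sq_sqrt (le_of_lt hp3)
  have hs2pos : 0 < s2 := Real.sqrt_pos.mpr hp2
  have hs3pos : 0 < s3 := Real.sqrt_pos.mpr hp3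
  have hdot : (p2/r2 - p1/r1) * (p3/r3 - p1/r1) + (q2/r2 - q1/r1) * (q3/r3 - q1/r1)
      = ((p2*r1-p1*r2)*(p3*r1-p1*r3) + (q2*r1-q1*r2)*(q3*r1-q1*r3)) / (r1^2*r2*r3) := by
    field_simp
  have hden : s3 / (r1*r2) * (s2 / (r1*r3)) = s2*s3 / (r1^2*r2*r3) := by
    field_simp
  rw [hdot, hden, div_div_div_cancel_right₀ (by positivity : (r1^2*r2*r3 : ℝ) ≠ 0)]
  have harg : 1 - (((p2*r1-p1*r2)*(p3*r1-p1*r3) + (q2*r1-q1*r2)*(q3*r1-q1*r3)) / (s2*s3))^2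
      = (r1 / (s2*s3))^2 := by
    rw [div_pow, div_pow, mul_pow, e2, e3]
    rw [eq_div_iff (mul_pos hp2 hp3).ne', sub_mul, div_mul_cancel₀ _ (mul_pos hp2 hp3).ne']
    linear_combination key
  rw [harg, Real.sqrt_sq (by positivity)]

set_option maxHeartbeats 1000000 in
/-- The sine of the interior angle of the triangle at vertex `uᵢ` is `rᵢ/(δⱼ δ_k)`. -/
theorem stmt5 (M : Matrix (Fin 3) (Fin 3) ℤ)
    (hr : ∀ i, 0 < M i 2) (hdet : M.det = 1)
    (u : Fin 3 → EuclideanSpace ℝ (Fin 2))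
    (hu : ∀ i, u i = ![(M i 0 : ℝ) / (M i 2 : ℝ), (M i 1 : ℝ) / (M i 2 : ℝ)])
    (L : Matrix (Fin 3) (Fin 3) ℝ)
    (hL : L = ((M.map (Int.cast : ℤ → ℝ))⁻¹).transpose)
    (δ : Fin 3 → ℝ)
    (hδ : ∀ i, δ i = Real.sqrt ((L i 0) ^ 2 + (L i 1) ^ 2)) :
    ∀ i j k : Fin 3, i ≠ j → j ≠ k → k ≠ i →
      Real.sin (EuclideanGeometry.angle (u j) (u i) (u k)) =
        (M i 2 : ℝ) / (δ j * δ k) := by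
  have hrR : ∀ i, (0:ℝ) < (M i 2 : ℝ) := fun i => by exact_mod_cast hr i
  have hdR : ((M.det : ℤ) : ℝ) = 1 := by rw [hdet]; norm_num
  rw [Matrix.det_fin_three] at hdR
  push_cast at hdR
  have hA1 : (M.map (Int.cast : ℤ → ℝ)).det = 1 := by
    rw [Matrix.det_fin_three]
    simp only [Matrix.map_apply]
    rw [Matrix.det_fin_three] at hdet
    exact_mod_cast congrArg (Int.cast : ℤ → ℝ) hdet
  have hL' : L = ((M.map (Int.cast : ℤ → ℝ)).adjugate).transpose := by
    rw [hL, Matrix.inv_def, hA1]; simp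
  have hL00 : L 0 0 = (M 1 1:ℝ)*(M 2 2:ℝ) - (M 1 2:ℝ)*(M 2 1:ℝ) := by
    rw [hL', Matrix.adjugate_fin_three]; simp [Matrix.map_apply]
  have hL01 : L 0 1 = -((M 1 0:ℝ)*(M 2 2:ℝ)) + (M 1 2:ℝ)*(M 2 0:ℝ) := by
    rw [hL', Matrix.adjugate_fin_three]; simp [Matrix.map_apply]
  have hL10 : L 1 0 = -((M 0 1:ℝ)*(M 2 2:ℝ)) + (M 0 2:ℝ)*(M 2 1:ℝ) := by
    rw [hL', Matrix.adjugate_fin_three]; simp [Matrix.map_apply]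
  have hL11 : L 1 1 = (M 0 0:ℝ)*(M 2 2:ℝ) - (M 0 2:ℝ)*(M 2 0:ℝ) := by
    rw [hL', Matrix.adjugate_fin_three]; simp [Matrix.map_apply]
  have hL20 : L 2 0 = (M 0 1:ℝ)*(M 1 2:ℝ) - (M 0 2:ℝ)*(M 1 1:ℝ) := by
    rw [hL', Matrix.adjugate_fin_three]; simp [Matrix.map_apply]
  have hL21 : L 2 1 = -((M 0 0:ℝ)*(M 1 2:ℝ)) + (M 0 2:ℝ)*(M 1 0:ℝ) := by
    rw [hL', Matrix.adjugate_fin_three]; simp [Matrix.map_apply]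
  intro i j k hij hjk hki
  fin_cases i <;> fin_cases j <;> fin_cases k <;> simp only [Fin.isValue, Fin.mk_zero, Fin.mk_one, Fin.reduceFinMk, id_eq] <;> try (exact absurd rfl (by assumption))
  · have hdp : ((M 0 0 : ℝ)*((M 1 1 : ℝ)*(M 2 2 : ℝ) - (M 2 1 : ℝ)*(M 1 2 : ℝ)) - (M 0 1 : ℝ)*((M 1 0 : ℝ)*(M 2 2 : ℝ) - (M 2 0 : ℝ)*(M 1 2 : ℝ)) + (M 0 2 : ℝ)*((M 1 0 : ℝ)*(M 2 1 : ℝ) - (M 2 0 : ℝ)*(M 1 1 : ℝ)))^2 = 1 := by linear_combination (((M 0 0:ℝ)*((M 1 1:ℝ)*(M 2 2:ℝ) - (M 2 1:ℝ)*(M 1 2:ℝ)) - (M 0 1:ℝ)*((M 1 0:ℝ)*(M 2 2:ℝ) - (M 2 0:ℝ)*(M 1 2:ℝ)) + (M 0 2:ℝ)*((M 1 0:ℝ)*(M 2 1:ℝ) - (M 2 0:ℝ)*(M 1 1:ℝ))) + 1) * hdR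
    rw [hδ 1, hδ 2,
      show ((L 1 0)^2 + (L 1 1)^2 : ℝ) = ((M 2 1 : ℝ)*(M 0 2 : ℝ) - (M 0 1 : ℝ)*(M 2 2 : ℝ))^2 + ((M 0 0 : ℝ)*(M 2 2 : ℝ) - (M 2 0 : ℝ)*(M 0 2 : ℝ))^2 from by rw [hL10, hL11]; ring,
      show ((L 2 0)^2 + (L 2 1)^2 : ℝ) = ((M 0 1 : ℝ)*(M 1 2 : ℝ) - (M 1 1 : ℝ)*(M 0 2 : ℝ))^2 + ((M 1 0 : ℝ)*(M 0 2 : ℝ) - (M 0 0 : ℝ)*(M 1 2 : ℝ))^2 from by rw [hL20, hL21]; ring,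
      core (M 0 0 : ℝ) (M 0 1 : ℝ) (M 0 2 : ℝ) (M 1 0 : ℝ) (M 1 1 : ℝ) (M 1 2 : ℝ) (M 2 0 : ℝ) (M 2 1 : ℝ) (M 2 2 : ℝ)
        (hrR 0) (hrR 1) (hrR 2) hdp (u 1) (u 0) (u 2) (hu 1) (hu 0) (hu 2)]
  · have hdp : ((M 0 0 : ℝ)*((M 2 1 : ℝ)*(M 1 2 : ℝ) - (M 1 1 : ℝ)*(M 2 2 : ℝ)) - (M 0 1 : ℝ)*((M 2 0 : ℝ)*(M 1 2 : ℝ) - (M 1 0 : ℝ)*(M 2 2 : ℝ)) + (M 0 2 : ℝ)*((M 2 0 : ℝ)*(M 1 1 : ℝ) - (M 1 0 : ℝ)*(M 2 1 : ℝ)))^2 = 1 := by linear_combination (((M 0 0:ℝ)*((M 1 1:ℝ)*(M 2 2:ℝ) - (M 2 1:ℝ)*(M 1 2:ℝ)) - (M 0 1:ℝ)*((M 1 0:ℝ)*(M 2 2:ℝ) - (M 2 0:ℝ)*(M 1 2:ℝ)) + (M 0 2:ℝ)*((M 1 0:ℝ)*(M 2 1:ℝ) - (M 2 0:ℝ)*(M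 1 1:ℝ))) + 1) * hdR
    rw [hδ 2, hδ 1,
      show ((L 2 0)^2 + (L 2 1)^2 : ℝ) = ((M 1 1 : ℝ)*(M 0 2 : ℝ) - (M 0 1 : ℝ)*(M 1 2 : ℝ))^2 + ((M 0 0 : ℝ)*(M 1 2 : ℝ) - (M 1 0 : ℝ)*(M 0 2 : ℝ))^2 from by rw [hL20, hL21]; ring,
      show ((L 1 0)^2 + (L 1 1)^2 : ℝ) = ((M 0 1 : ℝ)*(M 2 2 : ℝ) - (M 2 1 : ℝ)*(M 0 2 : ℝ))^2 + ((M 2 0 : ℝ)*(M 0 2 : ℝ) - (M 0 0 : ℝ)*(M 2 2 : ℝ))^2 from by rw [hL10, hL11]; ring,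
      core (M 0 0 : ℝ) (M 0 1 : ℝ) (M 0 2 : ℝ) (M 2 0 : ℝ) (M 2 1 : ℝ) (M 2 2 : ℝ) (M 1 0 : ℝ) (M 1 1 : ℝ) (M 1 2 : ℝ)
        (hrR 0) (hrR 2) (hrR 1) hdp (u 2) (u 0) (u 1) (hu 2) (hu 0) (hu 1)]
  · have hdp : ((M 1 0 : ℝ)*((M 0 1 : ℝ)*(M 2 2 : ℝ) - (M 2 1 : ℝ)*(M 0 2 : ℝ)) - (M 1 1 : ℝ)*((M 0 0 : ℝ)*(M 2 2 : ℝ) - (M 2 0 : ℝ)*(M 0 2 : ℝ)) + (M 1 2 : ℝ)*((M 0 0 : ℝ)*(M 2 1 : ℝ) - (M 2 0 : ℝ)*(M 0 1 : ℝ)))^2 = 1 := by linear_combination (((M 0 0:ℝ)*((M 1 1:ℝ)*(M 2 2:ℝ) - (M 2 1:ℝ)*(M 1 2:ℝ)) - (M 0 1:ℝ)*((M 1 0:ℝ)*(M 2 2:ℝ) - (M 2 0:ℝ)*(M 1 2:ℝ)) + (M 0 2:ℝ)*((M 1 0:ℝ)*(M 2 1:ℝ) - (M 2 0:ℝ)*(M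 1 1:ℝ))) + 1) * hdR
    rw [hδ 0, hδ 2,
      show ((L 0 0)^2 + (L 0 1)^2 : ℝ) = ((M 2 1 : ℝ)*(M 1 2 : ℝ) - (M 1 1 : ℝ)*(M 2 2 : ℝ))^2 + ((M 1 0 : ℝ)*(M 2 2 : ℝ) - (M 2 0 : ℝ)*(M 1 2 : ℝ))^2 from by rw [hL00, hL01]; ring,
      show ((L 2 0)^2 + (L 2 1)^2 : ℝ) = ((M 1 1 : ℝ)*(M 0 2 : ℝ) - (M 0 1 : ℝ)*(M 1 2 : ℝ))^2 + ((M 0 0 : ℝ)*(M 1 2 : ℝ) - (M 1 0 : ℝ)*(M 0 2 : ℝ))^2 from by rw [hL20, hL21]; ring,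
      core (M 1 0 : ℝ) (M 1 1 : ℝ) (M 1 2 : ℝ) (M 0 0 : ℝ) (M 0 1 : ℝ) (M 0 2 : ℝ) (M 2 0 : ℝ) (M 2 1 : ℝ) (M 2 2 : ℝ)
        (hrR 1) (hrR 0) (hrR 2) hdp (u 0) (u 1) (u 2) (hu 0) (hu 1) (hu 2)]
  · have hdp : ((M 1 0 : ℝ)*((M 2 1 : ℝ)*(M 0 2 : ℝ) - (M 0 1 : ℝ)*(M 2 2 : ℝ)) - (M 1 1 : ℝ)*((M 2 0 : ℝ)*(M 0 2 : ℝ) - (M 0 0 : ℝ)*(M 2 2 : ℝ)) + (M 1 2 : ℝ)*((M 2 0 : ℝ)*(M 0 1 : ℝ) - (M 0 0 : ℝ)*(M 2 1 : ℝ)))^2 = 1 := by linear_combination (((M 0 0:ℝ)*((M 1 1:ℝ)*(M 2 2:ℝ) - (M 2 1:ℝ)*(M 1 2:ℝ)) - (M 0 1:ℝ)*((M 1 0:ℝ)*(M 2 2:ℝ) - (M 2 0:ℝ)*(M 1 2:ℝ)) + (M 0 2:ℝ)*((M 1 0:ℝ)*(M 2 1:ℝ) - (M 2 0:ℝ)*(M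 1 1:ℝ))) + 1) * hdR
    rw [hδ 2, hδ 0,
      show ((L 2 0)^2 + (L 2 1)^2 : ℝ) = ((M 0 1 : ℝ)*(M 1 2 : ℝ) - (M 1 1 : ℝ)*(M 0 2 : ℝ))^2 + ((M 1 0 : ℝ)*(M 0 2 : ℝ) - (M 0 0 : ℝ)*(M 1 2 : ℝ))^2 from by rw [hL20, hL21]; ring,
      show ((L 0 0)^2 + (L 0 1)^2 : ℝ) = ((M 1 1 : ℝ)*(M 2 2 : ℝ) - (M 2 1 : ℝ)*(M 1 2 : ℝ))^2 + ((M 2 0 : ℝ)*(M 1 2 : ℝ) - (M 1 0 : ℝ)*(M 2 2 : ℝ))^2 from by rw [hL00, hL01]; ring,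
      core (M 1 0 : ℝ) (M 1 1 : ℝ) (M 1 2 : ℝ) (M 2 0 : ℝ) (M 2 1 : ℝ) (M 2 2 : ℝ) (M 0 0 : ℝ) (M 0 1 : ℝ) (M 0 2 : ℝ)
        (hrR 1) (hrR 2) (hrR 0) hdp (u 2) (u 1) (u 0) (hu 2) (hu 1) (hu 0)]
  · have hdp : ((M 2 0 : ℝ)*((M 0 1 : ℝ)*(M 1 2 : ℝ) - (M 1 1 : ℝ)*(M 0 2 : ℝ)) - (M 2 1 : ℝ)*((M 0 0 : ℝ)*(M 1 2 : ℝ) - (M 1 0 : ℝ)*(M 0 2 : ℝ)) + (M 2 2 : ℝ)*((M 0 0 : ℝ)*(M 1 1 : ℝ) - (M 1 0 : ℝ)*(M 0 1 : ℝ)))^2 = 1 := by linear_combination (((M 0 0:ℝ)*((M 1 1:ℝ)*(M 2 2:ℝ) - (M 2 1:ℝ)*(M 1 2:ℝ)) - (M 0 1:ℝ)*((M 1 0:ℝ)*(M 2 2:ℝ) - (M 2 0:ℝ)*(M 1 2:ℝ)) + (M 0 2:ℝ)*((M 1 0:ℝ)*(M 2 1:ℝ) - (M 2 0:ℝ)*(M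 1 1:ℝ))) + 1) * hdR
    rw [hδ 0, hδ 1,
      show ((L 0 0)^2 + (L 0 1)^2 : ℝ) = ((M 1 1 : ℝ)*(M 2 2 : ℝ) - (M 2 1 : ℝ)*(M 1 2 : ℝ))^2 + ((M 2 0 : ℝ)*(M 1 2 : ℝ) - (M 1 0 : ℝ)*(M 2 2 : ℝ))^2 from by rw [hL00, hL01]; ring,
      show ((L 1 0)^2 + (L 1 1)^2 : ℝ) = ((M 2 1 : ℝ)*(M 0 2 : ℝ) - (M 0 1 : ℝ)*(M 2 2 : ℝ))^2 + ((M 0 0 : ℝ)*(M 2 2 : ℝ) - (M 2 0 : ℝ)*(M 0 2 : ℝ))^2 from by rw [hL10, hL11]; ring,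
      core (M 2 0 : ℝ) (M 2 1 : ℝ) (M 2 2 : ℝ) (M 0 0 : ℝ) (M 0 1 : ℝ) (M 0 2 : ℝ) (M 1 0 : ℝ) (M 1 1 : ℝ) (M 1 2 : ℝ)
        (hrR 2) (hrR 0) (hrR 1) hdp (u 0) (u 2) (u 1) (hu 0) (hu 2) (hu 1)]
  · have hdp : ((M 2 0 : ℝ)*((M 1 1 : ℝ)*(M 0 2 : ℝ) - (M 0 1 : ℝ)*(M 1 2 : ℝ)) - (M 2 1 : ℝ)*((M 1 0 : ℝ)*(M 0 2 : ℝ) - (M 0 0 : ℝ)*(M 1 2 : ℝ)) + (M 2 2 : ℝ)*((M 1 0 : ℝ)*(M 0 1 : ℝ) - (M 0 0 : ℝ)*(M 1 1 : ℝ)))^2 = 1 := by linear_combination (((M 0 0:ℝ)*((M 1 1:ℝ)*(M 2 2:ℝ) - (M 2 1:ℝ)*(M 1 2:ℝ)) - (M 0 1:ℝ)*((M 1 0:ℝ)*(M 2 2:ℝ) - (M 2 0:ℝ)*(M 1 2:ℝ)) + (M 0 2:ℝ)*((M 1 0:ℝ)*(M 2 1:ℝ) - (M 2 0:ℝ)*(M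 1 1:ℝ))) + 1) * hdR
    rw [hδ 1, hδ 0,
      show ((L 1 0)^2 + (L 1 1)^2 : ℝ) = ((M 0 1 : ℝ)*(M 2 2 : ℝ) - (M 2 1 : ℝ)*(M 0 2 : ℝ))^2 + ((M 2 0 : ℝ)*(M 0 2 : ℝ) - (M 0 0 : ℝ)*(M 2 2 : ℝ))^2 from by rw [hL10, hL11]; ring,
      show ((L 0 0)^2 + (L 0 1)^2 : ℝ) = ((M 2 1 : ℝ)*(M 1 2 : ℝ) - (M 1 1 : ℝ)*(M 2 2 : ℝ))^2 + ((M 1 0 : ℝ)*(M 2 2 : ℝ) - (M 2 0 : ℝ)*(M 1 2 : ℝ))^2 from by rw [hL00, hL01]; ring,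
      core (M 2 0 : ℝ) (M 2 1 : ℝ) (M 2 2 : ℝ) (M 1 0 : ℝ) (M 1 1 : ℝ) (M 1 2 : ℝ) (M 0 0 : ℝ) (M 0 1 : ℝ) (M 0 2 : ℝ)
        (hrR 2) (hrR 1) (hrR 0) hdp (u 1) (u 2) (u 0) (hu 1) (hu 2) (hu 0)]
end

section
/- Let θ > π/4 and let D₀ ⊇ D₁ ⊇ D₂ ⊇ ... be a nested sequence of closed triangles in ℝ² such that every interior angle of every Dₙ exceeds θ and area(Dₙ) → 0. Then ⋂ₙ Dₙ is a singleton. -/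
open MeasureTheory EuclideanGeometry Filter Pointwise
open scoped ENNReal
open scoped RealInnerProductSpace


noncomputable def bE : Module.Basis (Fin 2) ℝ (EuclideanSpace ℝ (Fin 2)) :=
  (EuclideanSpace.basisFun (Fin 2) ℝ).toBasis

noncomputable def T0 : Set (EuclideanSpace ℝ (Fin 2)) :=
  convexHull ℝ {0, bE 0, bE 1}

lemma tri_vol (a u v : EuclideanSpace ℝ (Fin 2)) :
    volume (convexHull ℝ {a, a + u, a + v} : Set (EuclideanSpace ℝ (Fin 2))) =
      ENNReal.ofReal |u 0 * v 1 - u 1 * v 0| * volume T0 := by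
  set f : EuclideanSpace ℝ (Fin 2) →ₗ[ℝ] EuclideanSpace ℝ (Fin 2) := bE.constr ℝ ![u, v] with hf
  have h0 : f (bE 0) = u := by rw [hf, Module.Basis.constr_basis]; rfl
  have h1 : f (bE 1) = v := by rw [hf, Module.Basis.constr_basis]; rfl
  have hdet : LinearMap.det f = u 0 * v 1 - u 1 * v 0 := by
    rw [← LinearMap.det_toMatrix bE, Matrix.det_fin_two]
    simp only [LinearMap.toMatrix_apply, h0, h1]
    simp [bE, EuclideanSpace.basisFun_repr]
    ring
  have himg : f '' ({0, bE 0, bE 1} : Set _) = {0, u, v} := by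
    simp [Set.image_insert_eq, h0, h1]
  have hset : ({a, a + u, a + v} : Set (EuclideanSpace ℝ (Fin 2)))
      = a +ᵥ (f '' {0, bE 0, bE 1}) := by
    rw [himg, ← Set.image_vadd, Set.image_insert_eq, Set.image_insert_eq,
      Set.image_singleton]
    simp [vadd_eq_add]
  have heq : (convexHull ℝ {a, a + u, a + v} : Set (EuclideanSpace ℝ (Fin 2)))
      = a +ᵥ (f '' T0) := by
    rw [hset, convexHull_vadd, ← f.image_convexHull, T0]
  rw [heq, measure_vadd, Measure.addHaar_image_linearMap, hdet]

lemma T0_pos : 0 < volume T0 := by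
  have hconv : Convex ℝ T0 := convex_convexHull _ _
  have hspan : affineSpan ℝ T0 = ⊤ := by
    rw [← AffineSubspace.coe_eq_univ_iff]
    rw [T0, affineSpan_convexHull]
    have hr : ({bE 0, bE 1} : Set (EuclideanSpace ℝ (Fin 2))) = Set.range bE := by
      ext x
      constructor
      · rintro (h | h) <;> exact ⟨_, h.symm⟩
      · rintro ⟨i, rfl⟩; fin_cases i <;> simp
    rw [show ({0, bE 0, bE 1} : Set (EuclideanSpace ℝ (Fin 2)))
        = insert 0 {bE 0, bE 1} from rfl, affineSpan_insert_zero, hr, bE.span_eq]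
    simp
  have hne := hconv.interior_nonempty_iff_affineSpan_eq_top.2 hspan
  exact (isOpen_interior.measure_pos volume hne).trans_le (measure_mono interior_subset)

lemma T0_fin : volume T0 < ⊤ :=
  (Set.Finite.isCompact_convexHull (𝕜 := ℝ) (Set.toFinite _)).measure_lt_top

variable {V : Type*} [NormedAddCommGroup V] [InnerProductSpace ℝ V]

lemma tri_side_bound {u v : V} (hu : u ≠ 0) (hv : v ≠ 0) (hw : v - u ≠ 0)
    {sθ : ℝ} (hsθ : 0 < sθ)
    (hα : sθ ≤ Real.sin (InnerProductGeometry.angle u v))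
    (hβ : sθ ≤ Real.sin (InnerProductGeometry.angle (-u) (v - u)))
    (hγ : sθ ≤ Real.sin (InnerProductGeometry.angle (-v) (u - v))) :
    sθ ^ 2 * ‖u‖ ^ 2 ≤ Real.sqrt (⟪u, u⟫ * ⟪v, v⟫ - ⟪u, v⟫ * ⟪u, v⟫) ∧
    sθ ^ 2 * ‖v‖ ^ 2 ≤ Real.sqrt (⟪u, u⟫ * ⟪v, v⟫ - ⟪u, v⟫ * ⟪u, v⟫) ∧
    sθ ^ 2 * ‖v - u‖ ^ 2 ≤ Real.sqrt (⟪u, u⟫ * ⟪v, v⟫ - ⟪u, v⟫ * ⟪u, v⟫) := by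
  set s := Real.sqrt (⟪u, u⟫ * ⟪v, v⟫ - ⟪u, v⟫ * ⟪u, v⟫) with hs
  have comm : ⟪v, u⟫ = ⟪u, v⟫ := real_inner_comm u v
  have e1 : Real.sin (InnerProductGeometry.angle u v) * (‖u‖ * ‖v‖) = s := InnerProductGeometry.sin_angle_mul_norm_mul_norm u v
  have e2 : Real.sin (InnerProductGeometry.angle (-u) (v - u)) * (‖u‖ * ‖v - u‖) = s := by
    have h := InnerProductGeometry.sin_angle_mul_norm_mul_norm (-u) (v - u)
    rw [norm_neg] at h
    rw [h, hs]
    congr 1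
    simp only [inner_neg_neg, inner_neg_left, inner_neg_right, inner_sub_left,
      inner_sub_right, comm]
    ring
  have e3 : Real.sin (InnerProductGeometry.angle (-v) (u - v)) * (‖v‖ * ‖v - u‖) = s := by
    have h := InnerProductGeometry.sin_angle_mul_norm_mul_norm (-v) (u - v)
    rw [norm_neg, norm_sub_rev u v] at h
    rw [h, hs]
    congr 1
    simp only [inner_neg_neg, inner_neg_left, inner_neg_right, inner_sub_left,
      inner_sub_right, comm]
    ring
  have hnu : 0 < ‖u‖ := norm_pos_iff.2 hu
  have hnv : 0 < ‖v‖ := norm_pos_iff.2 hv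
  have hnw : 0 < ‖v - u‖ := norm_pos_iff.2 hw
  have hα1 : Real.sin (InnerProductGeometry.angle u v) ≤ 1 := Real.sin_le_one _
  have hβ1 : Real.sin (InnerProductGeometry.angle (-u) (v - u)) ≤ 1 := Real.sin_le_one _
  have hγ1 : Real.sin (InnerProductGeometry.angle (-v) (u - v)) ≤ 1 := Real.sin_le_one _
  have c1 : Real.sin (InnerProductGeometry.angle u v) * ‖u‖ = Real.sin (InnerProductGeometry.angle (-v) (u - v)) * ‖v - u‖ :=
    mul_right_cancel₀ hnv.ne' (by linear_combination e1 - e3)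
  have c2 : Real.sin (InnerProductGeometry.angle u v) * ‖v‖ = Real.sin (InnerProductGeometry.angle (-u) (v - u)) * ‖v - u‖ :=
    mul_right_cancel₀ hnu.ne' (by linear_combination e1 - e2)
  have c3 : Real.sin (InnerProductGeometry.angle (-u) (v - u)) * ‖u‖ = Real.sin (InnerProductGeometry.angle (-v) (u - v)) * ‖v‖ :=
    mul_right_cancel₀ hnw.ne' (by linear_combination e2 - e3)
  refine ⟨?_, ?_, ?_⟩
  · have h5 : sθ * ‖u‖ ≤ ‖v - u‖ := by nlinarith
    have h6 : sθ * (sθ * ‖u‖) ≤ Real.sin (InnerProductGeometry.angle (-u) (v - u)) * ‖v - u‖ :=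
      mul_le_mul hβ h5 (by positivity) (hsθ.le.trans hβ)
    nlinarith [mul_le_mul_of_nonneg_right h6 hnu.le]
  · have h5 : sθ * ‖v‖ ≤ ‖u‖ := by nlinarith
    have h6 : sθ * (sθ * ‖v‖) ≤ Real.sin (InnerProductGeometry.angle u v) * ‖u‖ :=
      mul_le_mul hα h5 (by positivity) (hsθ.le.trans hα)
    nlinarith [mul_le_mul_of_nonneg_right h6 hnv.le]
  · have h5 : sθ * ‖v - u‖ ≤ ‖v‖ := by nlinarith
    have h6 : sθ * (sθ * ‖v - u‖) ≤ Real.sin (InnerProductGeometry.angle (-v) (u - v)) * ‖v‖ :=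
      mul_le_mul hγ h5 (by positivity) (hsθ.le.trans hγ)
    nlinarith [mul_le_mul_of_nonneg_right h6 hnw.le]


/-- A nested sequence of closed triangles, all of whose angles exceed some
`θ > π/4`, whose areas tend to `0`, intersects in a single point. -/
theorem stmt9 (θ : ℝ) (hθ : Real.pi / 4 < θ)
    (A B C : ℕ → EuclideanSpace ℝ (Fin 2))
    (hind : ∀ n, AffineIndependent ℝ ![A n, B n, C n])
    (D : ℕ → Set (EuclideanSpace ℝ (Fin 2)))
    (hD : ∀ n, D n = convexHull ℝ {A n, B n, C n})
    (hnest : ∀ n, D (n + 1) ⊆ D n)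
    (hang : ∀ n, θ < angle (B n) (A n) (C n) ∧ θ < angle (A n) (B n) (C n) ∧
      θ < angle (A n) (C n) (B n))
    (harea : Tendsto (fun n => volume (D n)) atTop (nhds 0)) :
    ∃ x, (⋂ n, D n) = {x} := by
  have hπ := Real.pi_pos
  have hθ0 : 0 < θ := lt_trans (by linarith) hθ
  -- vectors
  set u : ℕ → EuclideanSpace ℝ (Fin 2) := fun n => B n - A n with hu
  set v : ℕ → EuclideanSpace ℝ (Fin 2) := fun n => C n - A n with hv
  -- distinctness
  have hpair : ∀ n, B n ≠ A n ∧ C n ≠ A n ∧ C n ≠ B n := by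
    intro n
    have hinj := (hind n).injective
    refine ⟨fun h => ?_, fun h => ?_, fun h => ?_⟩
    · have h10 : ![A n, B n, C n] 1 = ![A n, B n, C n] 0 := by simpa using h
      exact absurd (hinj h10) (by decide)
    · have h20 : ![A n, B n, C n] 2 = ![A n, B n, C n] 0 := by simpa using h
      exact absurd (hinj h20) (by decide)
    · have h21 : ![A n, B n, C n] 2 = ![A n, B n, C n] 1 := by simpa using h
      exact absurd (hinj h21) (by decide)
  have hne : ∀ n, u n ≠ 0 ∧ v n ≠ 0 ∧ v n - u n ≠ 0 := by
    intro n
    obtain ⟨h1, h2, h3⟩ := hpair n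
    refine ⟨sub_ne_zero.2 h1, sub_ne_zero.2 h2, fun h => h3 ?_⟩
    have h4 : v n - u n = C n - B n := by
      show C n - A n - (B n - A n) = C n - B n
      abel
    rw [h4] at h
    exact sub_eq_zero.1 h
  -- angles as vector angles
  have hangA : ∀ n, angle (B n) (A n) (C n) = InnerProductGeometry.angle (u n) (v n) := by
    intro n; rfl
  have hangB : ∀ n, angle (A n) (B n) (C n)
      = InnerProductGeometry.angle (-u n) (v n - u n) := by
    intro n
    show InnerProductGeometry.angle (A n -ᵥ B n) (C n -ᵥ B n) = _
    congr 1
    · show A n - B n = -(B n - A n); abel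
    · show C n - B n = C n - A n - (B n - A n); abel
  have hangC : ∀ n, angle (A n) (C n) (B n)
      = InnerProductGeometry.angle (-v n) (u n - v n) := by
    intro n
    show InnerProductGeometry.angle (A n -ᵥ C n) (B n -ᵥ C n) = _
    congr 1
    · show A n - C n = -(C n - A n); abel
    · show B n - C n = B n - A n - (C n - A n); abel
  -- angle sum
  have hsum : ∀ n, angle (B n) (A n) (C n) + angle (A n) (B n) (C n)
      + angle (A n) (C n) (B n) = Real.pi := by
    intro n
    have hAC : A n ≠ C n := fun h => (hpair n).2.1 h.symm
    have hBC : B n ≠ C n := fun h => (hpair n).2.2 h.symm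
    have := EuclideanGeometry.angle_add_angle_add_angle_eq_pi (p₁ := C n) (p₂ := A n)
      (p₃ := B n) hAC
    rw [angle_comm (C n) (A n) (B n), angle_comm (B n) (C n) (A n)] at this
    linarith [this]
  -- sin bounds
  set sθ : ℝ := Real.sin θ with hsθdef
  have hθhalf : θ < Real.pi / 2 := by
    have h := hsum 0
    have := (hang 0).1; have := (hang 0).2.1; have := (hang 0).2.2
    linarith
  have hsθ : 0 < sθ := Real.sin_pos_of_pos_of_lt_pi hθ0 (by linarith)
  have hsin : ∀ (x y z : ℝ), θ < x → θ < y → θ < z → x + y + z = Real.pi → sθ ≤ Real.sin x := by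
    intro x y z hx hy hz hxyz
    have hx2 : x < Real.pi / 2 := by linarith
    exact le_of_lt (Real.strictMonoOn_sin ⟨by linarith, by linarith⟩
      ⟨by linarith, hx2.le⟩ hx)
  -- determinant sequence
  set d : ℕ → ℝ := fun n => u n 0 * v n 1 - u n 1 * v n 0 with hd
  have hgram : ∀ n, ⟪u n, u n⟫ * ⟪v n, v n⟫ - ⟪u n, v n⟫ * ⟪u n, v n⟫ = d n ^ 2 := by
    intro n
    simp only [PiLp.inner_apply, RCLike.inner_apply, starRingEnd_apply, star_trivial,
      Fin.sum_univ_two, hd]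
    ring
  -- side bounds
  have hside : ∀ n, sθ ^ 2 * ‖u n‖ ^ 2 ≤ |d n| ∧ sθ ^ 2 * ‖v n‖ ^ 2 ≤ |d n| ∧
      sθ ^ 2 * ‖v n - u n‖ ^ 2 ≤ |d n| := by
    intro n
    obtain ⟨hu0, hv0, hw0⟩ := hne n
    obtain ⟨ha1, ha2, ha3⟩ := hang n
    have hb1 := hsin _ _ _ ha1 ha2 ha3 (hsum n)
    have hb2 := hsin _ _ _ ha2 ha1 ha3 (by linarith [hsum n])
    have hb3 := hsin _ _ _ ha3 ha1 ha2 (by linarith [hsum n])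
    rw [hangA n] at hb1
    rw [hangB n] at hb2
    rw [hangC n] at hb3
    have := tri_side_bound hu0 hv0 hw0 hsθ hb1 hb2 hb3
    rwa [hgram n, Real.sqrt_sq_eq_abs] at this
  -- volume identity
  have hvol : ∀ n, volume (D n) = ENNReal.ofReal |d n| * volume T0 := by
    intro n
    rw [hD n]
    have : ({A n, B n, C n} : Set (EuclideanSpace ℝ (Fin 2)))
        = {A n, A n + u n, A n + v n} := by
      have hb : A n + u n = B n := by show A n + (B n - A n) = B n; abel
      have hc : A n + v n = C n := by show A n + (C n - A n) = C n; abel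
      rw [hb, hc]
    rw [this, tri_vol]
  -- |d n| → 0
  have hdlim : Tendsto (fun n => |d n|) atTop (nhds 0) := by
    have h1 : ∀ n, ENNReal.ofReal |d n| = volume (D n) * (volume T0)⁻¹ := by
      intro n
      rw [hvol n, mul_assoc, ENNReal.mul_inv_cancel T0_pos.ne' T0_fin.ne, mul_one]
    have h2 : Tendsto (fun n => volume (D n) * (volume T0)⁻¹) atTop (nhds 0) := by
      have := ENNReal.Tendsto.mul_const (b := (volume T0)⁻¹) harea
        (Or.inr (ENNReal.inv_ne_top.2 T0_pos.ne'))
      simpa using this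
    have h3 : Tendsto (fun n => ENNReal.ofReal |d n|) atTop (nhds 0) := by
      simpa [← h1] using h2
    have h4 := (ENNReal.tendsto_toReal (by simp : (0 : ℝ≥0∞) ≠ ⊤)).comp h3
    have h5 := h4.congr fun n => ENNReal.toReal_ofReal (abs_nonneg (d n))
    simpa using h5
  -- r n bounds the diameter
  set r : ℕ → ℝ := fun n => Real.sqrt |d n| / sθ with hr
  have hrlim : Tendsto r atTop (nhds 0) := by
    have h1 : Tendsto (fun n => Real.sqrt |d n|) atTop (nhds (Real.sqrt 0)) :=
      (Real.continuous_sqrt.tendsto 0).comp hdlim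
    rw [Real.sqrt_zero] at h1
    simpa [hr] using h1.div_const sθ
  have hdnn : ∀ n, 0 ≤ r n := fun n => div_nonneg (Real.sqrt_nonneg _) hsθ.le
  have hdist : ∀ n, ∀ x ∈ D n, ∀ y ∈ D n, dist x y ≤ r n := by
    intro n x hx y hy
    have hb : ∀ z : EuclideanSpace ℝ (Fin 2), sθ ^ 2 * ‖z‖ ^ 2 ≤ |d n| → ‖z‖ ≤ r n := by
      intro z hz
      rw [hr, le_div_iff₀ hsθ]
      refine (Real.le_sqrt (by positivity) (abs_nonneg _)).2 ?_
      calc (‖z‖ * sθ) ^ 2 = sθ ^ 2 * ‖z‖ ^ 2 := by ring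
        _ ≤ |d n| := hz
    obtain ⟨h1, h2, h3⟩ := hside n
    have hAB : dist (A n) (B n) ≤ r n := by
      rw [dist_eq_norm, show A n - B n = -(u n) from by show _ = -(B n - A n); abel, norm_neg]
      exact hb _ h1
    have hAC : dist (A n) (C n) ≤ r n := by
      rw [dist_eq_norm, show A n - C n = -(v n) from by show _ = -(C n - A n); abel, norm_neg]
      exact hb _ h2
    have hBC : dist (B n) (C n) ≤ r n := by
      rw [dist_eq_norm, show B n - C n = -(v n - u n) from by show _ = -((C n - A n) - (B n - A n)); abel, norm_neg]
      exact hb _ h3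
    have hdiam : Metric.diam (D n) ≤ r n := by
      rw [hD n, Metric.diam, convexHull_ediam, ← Metric.diam]
      apply Metric.diam_le_of_forall_dist_le (hdnn n)
      intro p hp q hq
      simp only [Set.mem_insert_iff, Set.mem_singleton_iff] at hp hq
      rcases hp with rfl | rfl | rfl <;> rcases hq with rfl | rfl | rfl <;>
        first
          | (rw [dist_self]; exact hdnn n)
          | exact hAB | exact hAC | exact hBC
          | (rw [dist_comm]; first | exact hAB | exact hAC | exact hBC)
    have hbdd : Bornology.IsBounded (D n) := by
      rw [hD n]
      exact ((Set.toFinite _).isCompact_convexHull (𝕜 := ℝ)).isBounded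
    exact le_trans (Metric.dist_le_diam_of_mem hbdd hx hy) hdiam
  -- compactness and nonemptiness
  have hcomp : ∀ n, IsCompact (D n) := by
    intro n; rw [hD n]; exact (Set.toFinite _).isCompact_convexHull (𝕜 := ℝ)
  have hnonempty : ∀ n, (D n).Nonempty := by
    intro n
    exact ⟨A n, by rw [hD n]; exact subset_convexHull _ _ (Set.mem_insert _ _)⟩
  have hInter : (⋂ n, D n).Nonempty :=
    IsCompact.nonempty_iInter_of_sequence_nonempty_isCompact_isClosed D hnest hnonempty
      (hcomp 0) (fun n => (hcomp n).isClosed)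
  obtain ⟨x, hx⟩ := hInter
  refine ⟨x, ?_⟩
  apply Set.eq_singleton_iff_unique_mem.2 ⟨hx, ?_⟩
  intro y hy
  have hle : ∀ n, dist y x ≤ r n := fun n =>
    hdist n y (Set.mem_iInter.1 hy n) x (Set.mem_iInter.1 hx n)
  have : dist y x ≤ 0 := ge_of_tendsto hrlim (Eventually.of_forall hle)
  have : dist y x = 0 := le_antisymm this dist_nonneg
  exact dist_eq_zero.1 this
end

section
/- Suppose T₀ ⊇ T₁ ⊇ T₂ ⊇ ... is a sequence of regular triangles in ℝ² where each Tₙ₊₁ is obtained from Tₙ by a binary starring (replacing one vertex by the Farey mediant of two vertices). If dₙ₁ ≤ dₙ₂ ≤ dₙ₃ denote the denominators of the vertices of Tₙ, then dₙ₃ → ∞ and consequently area(Tₙ) = 1/(2dₙ₁dₙ₂dₙ₃) → 0. -/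
open MeasureTheory Filter Pointwise

lemma simplex_prod_vol :
    volume {p : ℝ × ℝ | 0 ≤ p.1 ∧ 0 ≤ p.2 ∧ p.1 + p.2 ≤ 1} = ENNReal.ofReal (1/2) := by
  have hmeas : MeasurableSet {p : ℝ × ℝ | 0 ≤ p.1 ∧ 0 ≤ p.2 ∧ p.1 + p.2 ≤ 1} := by
    apply MeasurableSet.inter (measurableSet_le measurable_const measurable_fst)
    exact MeasurableSet.inter (measurableSet_le measurable_const measurable_snd)
      (measurableSet_le (measurable_fst.add measurable_snd) measurable_const)
  rw [Measure.volume_eq_prod, Measure.prod_apply hmeas]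
  have key : ∀ x : ℝ, volume (Prod.mk x ⁻¹' {p : ℝ × ℝ | 0 ≤ p.1 ∧ 0 ≤ p.2 ∧ p.1 + p.2 ≤ 1})
      = Set.indicator (Set.Icc (0:ℝ) 1) (fun x => ENNReal.ofReal (1 - x)) x := by
    intro x
    by_cases hx : 0 ≤ x
    · have : Prod.mk x ⁻¹' {p : ℝ × ℝ | 0 ≤ p.1 ∧ 0 ≤ p.2 ∧ p.1 + p.2 ≤ 1}
          = Set.Icc 0 (1 - x) := by
        ext y
        simp only [Set.mem_preimage, Set.mem_setOf_eq, Set.mem_Icc, hx, true_and]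
        constructor <;> intro h <;> exact ⟨h.1, by linarith [h.2]⟩
      rw [this, Real.volume_Icc]
      by_cases hx1 : x ≤ 1
      · simp [Set.indicator_of_mem (Set.mem_Icc.2 ⟨hx, hx1⟩)]
      · rw [Set.indicator_of_notMem (by simp [hx1])]
        rw [ENNReal.ofReal_eq_zero]; linarith
    · have : Prod.mk x ⁻¹' {p : ℝ × ℝ | 0 ≤ p.1 ∧ 0 ≤ p.2 ∧ p.1 + p.2 ≤ 1} = ∅ := by
        ext y; simp [hx]
      rw [this, Set.indicator_of_notMem (by simp [hx])]; simp
  simp_rw [key]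
  rw [lintegral_indicator measurableSet_Icc]
  rw [← ofReal_integral_eq_lintegral_ofReal]
  · rw [show (∫ x in Set.Icc (0:ℝ) 1, (1 - x)) = 1/2 by
      rw [MeasureTheory.integral_Icc_eq_integral_Ioc, ← intervalIntegral.integral_of_le zero_le_one]
      rw [intervalIntegral.integral_sub (intervalIntegrable_const (c := (1:ℝ)))
        intervalIntegral.intervalIntegrable_id, integral_id]
      norm_num]
  · have : IntervalIntegrable (fun x : ℝ => 1 - x) volume 0 1 :=
      (intervalIntegrable_const (c := (1:ℝ))).sub intervalIntegral.intervalIntegrable_id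
    exact (intervalIntegrable_iff_integrableOn_Icc_of_le zero_le_one).1 this
  · filter_upwards [ae_restrict_mem measurableSet_Icc] with x hx
    rw [Set.mem_Icc] at hx
    show (0:ℝ) ≤ 1 - x
    linarith [hx.2]

noncomputable abbrev E2 := EuclideanSpace ℝ (Fin 2)

lemma simplex_E2_vol :
    volume {x : E2 | 0 ≤ x 0 ∧ 0 ≤ x 1 ∧ x 0 + x 1 ≤ 1} = ENNReal.ofReal (1/2) := by
  have hmp : MeasurePreserving
      ((MeasurableEquiv.toLp 2 (Fin 2 → ℝ)).symm.trans (MeasurableEquiv.finTwoArrow)) volume volume :=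
    (volume_preserving_finTwoArrow ℝ).comp (EuclideanSpace.volume_preserving_symm_measurableEquiv_toLp (Fin 2))
  have hs : {x : E2 | 0 ≤ x 0 ∧ 0 ≤ x 1 ∧ x 0 + x 1 ≤ 1}
      = ((MeasurableEquiv.toLp 2 (Fin 2 → ℝ)).symm.trans (MeasurableEquiv.finTwoArrow)) ⁻¹'
        {p : ℝ × ℝ | 0 ≤ p.1 ∧ 0 ≤ p.2 ∧ p.1 + p.2 ≤ 1} := rfl
  rw [hs, hmp.measure_preimage (by
    apply MeasurableSet.nullMeasurableSet
    apply MeasurableSet.inter (measurableSet_le measurable_const measurable_fst)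
    exact MeasurableSet.inter (measurableSet_le measurable_const measurable_snd)
      (measurableSet_le (measurable_fst.add measurable_snd) measurable_const)),
    simplex_prod_vol]

lemma simplex_E2_hull :
    {x : E2 | 0 ≤ x 0 ∧ 0 ≤ x 1 ∧ x 0 + x 1 ≤ 1}
      = convexHull ℝ {0, EuclideanSpace.single 0 1, EuclideanSpace.single 1 1} := by
  apply le_antisymm
  · intro x hx
    obtain ⟨h0, h1, hs⟩ := hx
    have hconv : Convex ℝ (convexHull ℝ
        ({0, EuclideanSpace.single 0 1, EuclideanSpace.single 1 1} : Set E2)) := convex_convexHull ℝ _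
    have := hconv.sum_mem (t := Finset.univ) (w := ![1 - x 0 - x 1, x 0, x 1])
      (z := ![0, EuclideanSpace.single 0 1, EuclideanSpace.single 1 1])
      (by intro i _; fin_cases i <;> simp <;> linarith)
      (by simp [Fin.sum_univ_three]; ring)
      (by intro i _; fin_cases i <;> exact subset_convexHull ℝ _ (by simp))
    convert this using 2
    rw [Fin.sum_univ_three]
    ext k
    fin_cases k <;>
      simp [EuclideanSpace.single_apply, PiLp.add_apply, PiLp.smul_apply]
  · apply convexHull_min
    · intro x hx
      rcases hx with h | h | h <;> subst h <;>
        constructor <;> simp [EuclideanSpace.single_apply]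
    · rintro x ⟨hx0, hx1, hxs⟩ y ⟨hy0, hy1, hys⟩ s t hs ht hst
      refine ⟨?_, ?_, ?_⟩ <;>
        simp only [PiLp.add_apply, PiLp.smul_apply, smul_eq_mul] <;> nlinarith

lemma vol_triangle (a b c : E2) :
    volume (convexHull ℝ {a, b, c}) =
      ENNReal.ofReal (|(b 0 - a 0) * (c 1 - a 1) - (c 0 - a 0) * (b 1 - a 1)| / 2) := by
  set M : Matrix (Fin 2) (Fin 2) ℝ := !![b 0 - a 0, c 0 - a 0; b 1 - a 1, c 1 - a 1] with hM
  set bb := (EuclideanSpace.basisFun (Fin 2) ℝ).toBasis with hbb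
  set L : E2 →ₗ[ℝ] E2 := Matrix.toLin bb bb M with hL
  have hbb0 : bb 0 = EuclideanSpace.single 0 1 := by
    rw [hbb, OrthonormalBasis.coe_toBasis, EuclideanSpace.basisFun_apply]
  have hbb1 : bb 1 = EuclideanSpace.single 1 1 := by
    rw [hbb, OrthonormalBasis.coe_toBasis, EuclideanSpace.basisFun_apply]
  have hLu : L (EuclideanSpace.single 0 1) = b - a := by
    rw [← hbb0, hL, Matrix.toLin_self]
    ext k
    rw [Fin.sum_univ_two]
    fin_cases k <;> simp [hbb0, hbb1, EuclideanSpace.single_apply, hM]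
  have hLw : L (EuclideanSpace.single 1 1) = c - a := by
    rw [← hbb1, hL, Matrix.toLin_self]
    ext k
    rw [Fin.sum_univ_two]
    fin_cases k <;> simp [hbb0, hbb1, EuclideanSpace.single_apply, hM]
  have himg : convexHull ℝ ({a, b, c} : Set E2) =
      (fun x => a + x) '' (L '' {x : E2 | 0 ≤ x 0 ∧ 0 ≤ x 1 ∧ x 0 + x 1 ≤ 1}) := by
    rw [simplex_E2_hull, L.image_convexHull]
    have : L '' {0, EuclideanSpace.single 0 1, EuclideanSpace.single 1 1} = {0, b - a, c - a} := by
      rw [Set.image_insert_eq, Set.image_insert_eq, Set.image_singleton, map_zero, hLu, hLw]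
    rw [this]
    have : (fun x => a + x) '' convexHull ℝ ({0, b - a, c - a} : Set E2)
        = a +ᵥ convexHull ℝ ({0, b - a, c - a} : Set E2) := rfl
    rw [this, ← convexHull_vadd]
    congr 1
    have : a +ᵥ ({0, b - a, c - a} : Set E2) = (fun x => a + x) '' {0, b - a, c - a} := rfl
    rw [this, Set.image_insert_eq, Set.image_insert_eq, Set.image_singleton]
    simp
  rw [himg]
  have h1 : volume ((fun x => a + x) '' (L '' {x : E2 | 0 ≤ x 0 ∧ 0 ≤ x 1 ∧ x 0 + x 1 ≤ 1}))
      = volume (L '' {x : E2 | 0 ≤ x 0 ∧ 0 ≤ x 1 ∧ x 0 + x 1 ≤ 1}) := by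
    rw [Set.image_add_left, measure_preimage_add]
  rw [h1, Measure.addHaar_image_linearMap, simplex_E2_vol, hL, LinearMap.det_toLin,
    ← ENNReal.ofReal_mul (abs_nonneg _)]
  congr 1
  rw [Matrix.det_fin_two, hM]
  simp only [Matrix.of_apply, Matrix.cons_val', Matrix.cons_val_zero, Matrix.empty_val',
    Matrix.cons_val_fin_one, Matrix.cons_val_one, Matrix.head_cons, Matrix.head_fin_const]
  ring

/-- Along a sequence of binary starrings of regular triangles, the largest vertex
denominator tends to infinity and hence the areas `1/(2d₁d₂d₃)` tend to `0`. -/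
theorem stmt15 (v : ℕ → Fin 3 → Fin 3 → ℤ)
    (hpos : ∀ i, 0 < v 0 i 2)
    (hdet : (Matrix.of (v 0)).det = 1 ∨ (Matrix.of (v 0)).det = -1)
    (hstar : ∀ n, ∃ i j : Fin 3, i ≠ j ∧ v (n + 1) i = v n i + v n j ∧
      ∀ k, k ≠ i → v (n + 1) k = v n k)
    (T : ℕ → Set (EuclideanSpace ℝ (Fin 2)))
    (hT : ∀ n, T n = convexHull ℝ
      {x | ∃ i : Fin 3, x = WithLp.toLp 2 ![(v n i 0 : ℝ) / (v n i 2 : ℝ), (v n i 1 : ℝ) / (v n i 2 : ℝ)]}) :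
    Tendsto (fun n => max (v n 0 2) (max (v n 1 2) (v n 2 2))) atTop atTop ∧
    (∀ n, volume (T n) = ENNReal.ofReal (1 / (2 * (v n 0 2) * (v n 1 2) * (v n 2 2)))) ∧
    Tendsto (fun n => volume (T n)) atTop (nhds 0) := by
  -- positivity of denominators at all times
  have hposall : ∀ n i, 0 < v n i 2 := by
    intro n
    induction n with
    | zero => exact hpos
    | succ n ih =>
      intro k
      obtain ⟨i, j, hij, hrepl, hkeep⟩ := hstar n
      by_cases hk : k = i
      · subst hk
        rw [congrFun hrepl 2, Pi.add_apply]
        exact add_pos (ih k) (ih j)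
      · rw [hkeep k hk]
        exact ih k
  -- determinant stays ±1
  have hdetall : ∀ n, (Matrix.of (v n)).det = 1 ∨ (Matrix.of (v n)).det = -1 := by
    intro n
    induction n with
    | zero => exact hdet
    | succ n ih =>
      obtain ⟨i, j, hij, hrepl, hkeep⟩ := hstar n
      have hupd : Matrix.of (v (n+1))
          = (Matrix.of (v n)).updateRow i (Matrix.of (v n) i + (1:ℤ) • Matrix.of (v n) j) := by
        ext k l
        by_cases hk : k = i
        · subst hk
          rw [Matrix.updateRow_self]
          simp only [one_smul, Matrix.of_apply, Pi.add_apply]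
          rw [congrFun hrepl l, Pi.add_apply]
        · rw [Matrix.updateRow_ne hk]
          simp only [Matrix.of_apply]
          rw [hkeep k hk]
      rw [hupd, Matrix.det_updateRow_add_smul_self _ hij]
      exact ih
  -- the sum of denominators grows at least linearly
  have hsum : ∀ n : ℕ, (n : ℤ) + 3 ≤ v n 0 2 + v n 1 2 + v n 2 2 := by
    intro n
    induction n with
    | zero =>
      simp only [Nat.cast_zero, zero_add]
      have h0 := hpos 0; have h1 := hpos 1; have h2 := hpos 2
      omega
    | succ n ih =>
      obtain ⟨i, j, hij, hrepl, hkeep⟩ := hstar n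
      have hge : ∀ k, v n k 2 ≤ v (n+1) k 2 := by
        intro k
        by_cases hk : k = i
        · subst hk
          rw [congrFun hrepl 2, Pi.add_apply]
          have := hposall n j
          omega
        · rw [hkeep k hk]
      have hgt : v n i 2 + 1 ≤ v (n+1) i 2 := by
        rw [congrFun hrepl 2, Pi.add_apply]
        have := hposall n j
        omega
      have h0 := hge 0; have h1 := hge 1; have h2 := hge 2
      have hi3 : i = 0 ∨ i = 1 ∨ i = 2 := by fin_cases i <;> simp
      rcases hi3 with rfl | rfl | rfl <;> push_cast <;> omega
  -- part 1 : max denominator tends to infinity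
  have hmax : Tendsto (fun n => max (v n 0 2) (max (v n 1 2) (v n 2 2))) atTop atTop := by
    rw [tendsto_atTop]
    intro b
    filter_upwards [eventually_ge_atTop (3 * b.natAbs)] with n hn
    have hs := hsum n
    have h0 : v n 0 2 ≤ max (v n 0 2) (max (v n 1 2) (v n 2 2)) := le_max_left _ _
    have h1 : v n 1 2 ≤ max (v n 0 2) (max (v n 1 2) (v n 2 2)) :=
      le_trans (le_max_left _ _) (le_max_right _ _)
    have h2 : v n 2 2 ≤ max (v n 0 2) (max (v n 1 2) (v n 2 2)) :=
      le_trans (le_max_right _ _) (le_max_right _ _)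
    omega
  -- part 2 : area formula
  have harea : ∀ n, volume (T n)
      = ENNReal.ofReal (1 / (2 * (v n 0 2) * (v n 1 2) * (v n 2 2))) := by
    intro n
    have hTn : T n = convexHull ℝ
        ({WithLp.toLp 2 ![(v n 0 0 : ℝ) / (v n 0 2 : ℝ), (v n 0 1 : ℝ) / (v n 0 2 : ℝ)],
           WithLp.toLp 2 ![(v n 1 0 : ℝ) / (v n 1 2 : ℝ), (v n 1 1 : ℝ) / (v n 1 2 : ℝ)],
           WithLp.toLp 2 ![(v n 2 0 : ℝ) / (v n 2 2 : ℝ), (v n 2 1 : ℝ) / (v n 2 2 : ℝ)]} :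
          Set (EuclideanSpace ℝ (Fin 2))) := by
      rw [hT n]
      congr 1
      ext x
      simp only [Set.mem_setOf_eq, Set.mem_insert_iff, Set.mem_singleton_iff]
      constructor
      · rintro ⟨i, rfl⟩
        fin_cases i
        · left; rfl
        · right; left; rfl
        · right; right; rfl
      · rintro (rfl | rfl | rfl)
        exacts [⟨0, rfl⟩, ⟨1, rfl⟩, ⟨2, rfl⟩]
    rw [hTn, vol_triangle]
    congr 1
    have d0 : (0:ℝ) < (v n 0 2 : ℝ) := by exact_mod_cast hposall n 0
    have d1 : (0:ℝ) < (v n 1 2 : ℝ) := by exact_mod_cast hposall n 1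
    have d2 : (0:ℝ) < (v n 2 2 : ℝ) := by exact_mod_cast hposall n 2
    have key : ((WithLp.toLp 2 ![(v n 1 0 : ℝ) / (v n 1 2 : ℝ), (v n 1 1 : ℝ) / (v n 1 2 : ℝ)] :
          EuclideanSpace ℝ (Fin 2)) 0
        - (WithLp.toLp 2 ![(v n 0 0 : ℝ) / (v n 0 2 : ℝ), (v n 0 1 : ℝ) / (v n 0 2 : ℝ)] :
          EuclideanSpace ℝ (Fin 2)) 0)
        * ((WithLp.toLp 2 ![(v n 2 0 : ℝ) / (v n 2 2 : ℝ), (v n 2 1 : ℝ) / (v n 2 2 : ℝ)] :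
          EuclideanSpace ℝ (Fin 2)) 1
        - (WithLp.toLp 2 ![(v n 0 0 : ℝ) / (v n 0 2 : ℝ), (v n 0 1 : ℝ) / (v n 0 2 : ℝ)] :
          EuclideanSpace ℝ (Fin 2)) 1)
        - ((WithLp.toLp 2 ![(v n 2 0 : ℝ) / (v n 2 2 : ℝ), (v n 2 1 : ℝ) / (v n 2 2 : ℝ)] :
          EuclideanSpace ℝ (Fin 2)) 0
        - (WithLp.toLp 2 ![(v n 0 0 : ℝ) / (v n 0 2 : ℝ), (v n 0 1 : ℝ) / (v n 0 2 : ℝ)] :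
          EuclideanSpace ℝ (Fin 2)) 0)
        * ((WithLp.toLp 2 ![(v n 1 0 : ℝ) / (v n 1 2 : ℝ), (v n 1 1 : ℝ) / (v n 1 2 : ℝ)] :
          EuclideanSpace ℝ (Fin 2)) 1
        - (WithLp.toLp 2 ![(v n 0 0 : ℝ) / (v n 0 2 : ℝ), (v n 0 1 : ℝ) / (v n 0 2 : ℝ)] :
          EuclideanSpace ℝ (Fin 2)) 1)
        = ((Matrix.of (v n)).det : ℝ) / ((v n 0 2 : ℝ) * (v n 1 2 : ℝ) * (v n 2 2 : ℝ)) := by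
      show ((v n 1 0 : ℝ) / (v n 1 2 : ℝ) - (v n 0 0 : ℝ) / (v n 0 2 : ℝ))
          * ((v n 2 1 : ℝ) / (v n 2 2 : ℝ) - (v n 0 1 : ℝ) / (v n 0 2 : ℝ))
        - ((v n 2 0 : ℝ) / (v n 2 2 : ℝ) - (v n 0 0 : ℝ) / (v n 0 2 : ℝ))
          * ((v n 1 1 : ℝ) / (v n 1 2 : ℝ) - (v n 0 1 : ℝ) / (v n 0 2 : ℝ)) = _
      rw [Matrix.det_fin_three]
      push_cast
      simp only [Matrix.of_apply]
      field_simp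
      ring
    rw [key]
    have hdabs : |((Matrix.of (v n)).det : ℝ)| = 1 := by
      rcases hdetall n with h | h <;> rw [h] <;> norm_num
    rw [abs_div, hdabs, abs_of_pos (by positivity)]
    rw [div_div]
    congr 1
    ring
  refine ⟨hmax, harea, ?_⟩
  -- part 3 : areas tend to zero
  have h23 : ∀ n : ℕ, max (v n 0 2) (max (v n 1 2) (v n 2 2))
      ≤ 2 * v n 0 2 * v n 1 2 * v n 2 2 := by
    intro n
    have h0 := hposall n 0; have h1 := hposall n 1; have h2 := hposall n 2
    have h01 : 1 ≤ v n 0 2 * v n 1 2 := by simpa using Int.add_one_le_of_lt (mul_pos h0 h1)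
    have h02 : 1 ≤ v n 0 2 * v n 2 2 := by simpa using Int.add_one_le_of_lt (mul_pos h0 h2)
    have h12 : 1 ≤ v n 1 2 * v n 2 2 := by simpa using Int.add_one_le_of_lt (mul_pos h1 h2)
    apply max_le
    · nlinarith
    · apply max_le
      · nlinarith
      · nlinarith
  have hbig : Tendsto (fun n => (2 * v n 0 2 * v n 1 2 * v n 2 2 : ℤ)) atTop atTop :=
    tendsto_atTop_mono h23 hmax
  have hreal : Tendsto (fun n => ((2 * v n 0 2 * v n 1 2 * v n 2 2 : ℤ) : ℝ)) atTop atTop :=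
    tendsto_intCast_atTop_atTop.comp hbig
  have hinv : Tendsto (fun n => 1 / ((2 * v n 0 2 * v n 1 2 * v n 2 2 : ℤ) : ℝ))
      atTop (nhds 0) := by
    simpa only [one_div, Pi.inv_def] using hreal.inv_tendsto_atTop
  have hfin : Tendsto (fun n => ENNReal.ofReal
      (1 / ((2 * v n 0 2 * v n 1 2 * v n 2 2 : ℤ) : ℝ))) atTop (nhds 0) := by
    have := (ENNReal.continuous_ofReal.tendsto 0).comp hinv
    simpa [Function.comp_def] using this
  apply hfin.congr
  intro n
  rw [harea n]
  congr 1
  push_cast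
  ring
end
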